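/- arXiv:1607.03717 — 2 statements merged into one kernel-verified Lean document; each statement's English description precedes it below -/
import Mathlib

section
/- Let X = diag(x_1ᵀ, …, x_nᵀ) be the n × np block-diagonal matrix with rows x_iᵀ ∈ ℝ^{1×p}, let Z ∈ ℝ^{n×q}, Q_Z = I_n − Z(ZᵀZ)⁻¹Zᵀ (assuming ZᵀZ invertible), A = D ⊗ I_p, and ϑ > 0. If the smallest eigenvalue of Σᵢ (x_iᵀ, z_iᵀ)ᵀ(x_iᵀ, z_iᵀ) is positive, then XᵀQ_Z X + ϑ AᵀA is positive definite, hence invertible. -/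
open Matrix Kronecker

private lemma quad_form' {m k : Type*} [Fintype m] [Fintype k] (B : Matrix m k ℝ) (a : k → ℝ) :
    a ⬝ᵥ (Bᵀ * B) *ᵥ a = (B *ᵥ a) ⬝ᵥ (B *ᵥ a) := by
  rw [← Matrix.mulVec_mulVec, Matrix.dotProduct_mulVec, Matrix.vecMul_transpose]

private lemma dp_nonneg' {k : Type*} [Fintype k] (v : k → ℝ) : 0 ≤ v ⬝ᵥ v :=
  Finset.sum_nonneg fun _ _ => mul_self_nonneg _

private lemma dp_sum' {k ι : Type*} [Fintype k] (s : Finset ι) (v : k → ℝ) (f : ι → k → ℝ) :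
    v ⬝ᵥ (∑ i ∈ s, f i) = ∑ i ∈ s, v ⬝ᵥ f i := by
  simp only [dotProduct, Finset.sum_apply, Finset.mul_sum]
  exact Finset.sum_comm

private lemma sum_vmv_mulVec' {k ι : Type*} [Fintype k] [Fintype ι] (u : ι → k → ℝ) (v : k → ℝ) :
    (∑ i, Matrix.vecMulVec (u i) (u i)) *ᵥ v = ∑ i, (u i ⬝ᵥ v) • u i := by
  ext j
  simp only [Matrix.mulVec, dotProduct, Matrix.sum_apply, Matrix.vecMulVec_apply,
    Finset.sum_apply, Pi.smul_apply, smul_eq_mul, Finset.sum_mul]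
  rw [Finset.sum_comm]
  exact Finset.sum_congr rfl fun i _ => Finset.sum_congr rfl fun k _ => by ring

private lemma hvM_aux' {k ι : Type*} [Fintype k] [Fintype ι] (u : ι → k → ℝ) (v : k → ℝ) :
    v ⬝ᵥ (∑ i, Matrix.vecMulVec (u i) (u i)) *ᵥ v = ∑ i, (u i ⬝ᵥ v) ^ 2 := by
  rw [sum_vmv_mulVec', dp_sum']
  refine Finset.sum_congr rfl fun i _ => ?_
  rw [dotProduct_smul, smul_eq_mul, dotProduct_comm, sq]

/-- If ZᵀZ is invertible and the smallest eigenvalue of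
Σᵢ (xᵢᵀ, zᵢᵀ)ᵀ(xᵢᵀ, zᵢᵀ) is positive, then XᵀQ_Z X + ϑ AᵀA is positive definite,
hence invertible. -/
theorem stmt_4 (n p q : ℕ) (x : Fin n → Fin p → ℝ) (z : Fin n → Fin q → ℝ)
    (vth : ℝ) (hvth : 0 < vth)
    (D : Matrix {r : Fin n × Fin n // r.1 < r.2} (Fin n) ℝ)
    (hD : ∀ r k, D r k = (if k = r.1.1 then (1 : ℝ) else 0) - (if k = r.1.2 then 1 else 0))
    (Z : Matrix (Fin n) (Fin q) ℝ) (hZ : Z = Matrix.of z)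
    (hZZ : IsUnit (Zᵀ * Z))
    (M : Matrix (Fin p ⊕ Fin q) (Fin p ⊕ Fin q) ℝ)
    (hM : M = ∑ i, Matrix.vecMulVec (Sum.elim (x i) (z i)) (Sum.elim (x i) (z i)))
    (hMpd : M.PosDef) :
    let X : Matrix (Fin n) (Fin n × Fin p) ℝ :=
      Matrix.of fun i jl => if jl.1 = i then x i jl.2 else 0
    let A := D ⊗ₖ (1 : Matrix (Fin p) (Fin p) ℝ)
    let Qz := (1 : Matrix (Fin n) (Fin n) ℝ) - Z * (Zᵀ * Z)⁻¹ * Zᵀ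
    (Xᵀ * Qz * X + vth • (Aᵀ * A)).PosDef ∧ IsUnit (Xᵀ * Qz * X + vth • (Aᵀ * A)) := by
  intro X A Qz
  have hZZd : IsUnit (Zᵀ * Z).det := (Matrix.isUnit_iff_isUnit_det _).mp hZZ
  have hinv : (Zᵀ * Z)⁻¹ * (Zᵀ * Z) = 1 := Matrix.nonsing_inv_mul _ hZZd
  have hinvsym : ((Zᵀ * Z)⁻¹)ᵀ = (Zᵀ * Z)⁻¹ := by
    rw [Matrix.transpose_nonsing_inv, Matrix.transpose_mul, Matrix.transpose_transpose]
  have hQzsym : Qzᵀ = Qz := by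
    show ((1 : Matrix (Fin n) (Fin n) ℝ) - Z * (Zᵀ * Z)⁻¹ * Zᵀ)ᵀ = _
    rw [Matrix.transpose_sub, Matrix.transpose_one, Matrix.transpose_mul, Matrix.transpose_mul,
      hinvsym, Matrix.transpose_transpose, ← Matrix.mul_assoc]
  have hQzidem : Qz * Qz = Qz := by
    show ((1 : Matrix (Fin n) (Fin n) ℝ) - Z * (Zᵀ * Z)⁻¹ * Zᵀ) *
        ((1 : Matrix (Fin n) (Fin n) ℝ) - Z * (Zᵀ * Z)⁻¹ * Zᵀ) = _
    have hPP : (Z * (Zᵀ * Z)⁻¹ * Zᵀ) * (Z * (Zᵀ * Z)⁻¹ * Zᵀ) = Z * (Zᵀ * Z)⁻¹ * Zᵀ := by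
      calc (Z * (Zᵀ * Z)⁻¹ * Zᵀ) * (Z * (Zᵀ * Z)⁻¹ * Zᵀ)
          = Z * ((Zᵀ * Z)⁻¹ * (Zᵀ * Z)) * ((Zᵀ * Z)⁻¹ * Zᵀ) := by
            simp only [Matrix.mul_assoc]
        _ = Z * (Zᵀ * Z)⁻¹ * Zᵀ := by rw [hinv, Matrix.mul_one, Matrix.mul_assoc]
    rw [Matrix.sub_mul, Matrix.mul_sub, Matrix.mul_sub, Matrix.one_mul, Matrix.mul_one, hPP]
    simp only [Matrix.one_mul]
    show _ = (1 : Matrix (Fin n) (Fin n) ℝ) - Z * (Zᵀ * Z)⁻¹ * Zᵀ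
    abel
  have hsplit : Xᵀ * Qz * X = (Qz * X)ᵀ * (Qz * X) := by
    calc Xᵀ * Qz * X = Xᵀ * (Qz * Qz) * X := by rw [hQzidem]
      _ = (Qz * X)ᵀ * (Qz * X) := by
          rw [Matrix.transpose_mul, hQzsym]; simp only [Matrix.mul_assoc]
  have key : ∀ a : Fin n × Fin p → ℝ, a ≠ 0 →
      ¬ (Qz *ᵥ (X *ᵥ a) = 0 ∧ A *ᵥ a = 0) := by
    rintro a ha ⟨hQ0, hA0⟩
    have hconst0 : ∀ i j : Fin n, i < j → ∀ l, a (i, l) = a (j, l) := by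
      intro i j hij l
      have h := congrFun hA0 (⟨(i, j), hij⟩, l)
      simp only [Matrix.mulVec, dotProduct, A, Matrix.kroneckerMap_apply, Fintype.sum_prod_type,
        Matrix.one_apply, hD, Pi.zero_apply, mul_ite, mul_one, mul_zero, ite_mul, zero_mul,
        sub_mul, one_mul] at h
      simp only [Finset.sum_ite_eq, Finset.sum_ite_eq', Finset.mem_univ, if_true,
        Finset.sum_sub_distrib] at h
      linarith
    have hconst : ∀ i j : Fin n, ∀ l, a (i, l) = a (j, l) := by
      intro i j l
      rcases lt_trichotomy i j with h | h | h
      · exact hconst0 i j h l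
      · rw [h]
      · exact (hconst0 j i h l).symm
    obtain ⟨⟨i₀, l₀⟩, h0⟩ := Function.ne_iff.mp ha
    set c : Fin p → ℝ := fun l => a (i₀, l) with hc
    have hac : ∀ i l, a (i, l) = c l := fun i l => hconst i i₀ l
    have hu : ∀ i, (X *ᵥ a) i = x i ⬝ᵥ c := by
      intro i
      have he : (X *ᵥ a) i = ∑ jl : Fin n × Fin p, (if jl.1 = i then x i jl.2 else 0) * a jl :=
        rfl
      rw [he, Fintype.sum_prod_type,
        Finset.sum_eq_single i (fun j _ hj => by simp [hj]) (by simp)]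
      simp [dotProduct, hac]
    set u : Fin n → ℝ := X *ᵥ a with hudef
    set w : Fin q → ℝ := ((Zᵀ * Z)⁻¹ * Zᵀ) *ᵥ u with hw
    have huZw : u = Z *ᵥ w := by
      have h1 : u - (Z * (Zᵀ * Z)⁻¹ * Zᵀ) *ᵥ u = 0 := by
        have h2 := hQ0
        rwa [Matrix.sub_mulVec, Matrix.one_mulVec] at h2
      have h2 : u = (Z * (Zᵀ * Z)⁻¹ * Zᵀ) *ᵥ u := sub_eq_zero.mp h1
      conv_rhs => rw [hw, Matrix.mulVec_mulVec, ← Matrix.mul_assoc]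
      exact h2
    set v : Fin p ⊕ Fin q → ℝ := Sum.elim c (fun m => - w m) with hv
    have hvne : v ≠ 0 := by
      intro hv0
      exact h0 (by simpa [hv, hc] using congrFun hv0 (Sum.inl l₀))
    have hpos := hMpd.dotProduct_mulVec_pos hvne
    have hvM : star v ⬝ᵥ M *ᵥ v = ∑ i, (Sum.elim (x i) (z i) ⬝ᵥ v) ^ 2 := by
      rw [star_trivial, hM, hvM_aux']
    have hzero : ∀ i, Sum.elim (x i) (z i) ⬝ᵥ v = 0 := by
      intro i
      have h1 : x i ⬝ᵥ c = z i ⬝ᵥ w := by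
        have h := congrFun huZw i
        rw [hu i] at h
        rw [h]
        simp [Matrix.mulVec, dotProduct, hZ]
      rw [hv, sumElim_dotProduct_sumElim]
      have h2 : x i ⬝ᵥ c - z i ⬝ᵥ w = 0 := by rw [h1, sub_self]
      have h3 : z i ⬝ᵥ (fun m => - w m) = - (z i ⬝ᵥ w) := by
        simp [dotProduct, Finset.sum_neg_distrib]
      rw [h3]
      linarith
    rw [hvM] at hpos
    have hzs : (∑ i, (Sum.elim (x i) (z i) ⬝ᵥ v) ^ 2) = 0 :=
      Finset.sum_eq_zero fun i _ => by rw [hzero i]; ring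
    rw [hzs] at hpos
    exact lt_irrefl 0 hpos
  have hherm : (Xᵀ * Qz * X + vth • (Aᵀ * A)).IsHermitian := by
    unfold Matrix.IsHermitian
    rw [Matrix.conjTranspose_eq_transpose_of_trivial, Matrix.transpose_add,
      Matrix.transpose_smul, Matrix.transpose_mul, Matrix.transpose_mul,
      Matrix.transpose_transpose, hQzsym, Matrix.transpose_mul, Matrix.transpose_transpose,
      Matrix.mul_assoc]
  have hpd : (Xᵀ * Qz * X + vth • (Aᵀ * A)).PosDef := by
    refine Matrix.PosDef.of_dotProduct_mulVec_pos hherm fun a ha => ?_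
    rw [star_trivial, Matrix.add_mulVec, dotProduct_add, Matrix.smul_mulVec,
      dotProduct_smul, hsplit, quad_form' (Qz * X) a, quad_form' A a,
      ← Matrix.mulVec_mulVec]
    have h1 : 0 ≤ (Qz *ᵥ (X *ᵥ a)) ⬝ᵥ (Qz *ᵥ (X *ᵥ a)) := dp_nonneg' _
    have h2 : 0 ≤ (A *ᵥ a) ⬝ᵥ (A *ᵥ a) := dp_nonneg' _
    rcases h1.lt_or_eq with hs | hs
    · have : (0:ℝ) ≤ vth • ((A *ᵥ a) ⬝ᵥ (A *ᵥ a)) := by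
        rw [smul_eq_mul]; exact mul_nonneg hvth.le h2
      linarith
    · have hQ : Qz *ᵥ (X *ᵥ a) = 0 := dotProduct_self_eq_zero.mp hs.symm
      have hAne : A *ᵥ a ≠ 0 := fun hA => key a ha ⟨hQ, hA⟩
      have h3 : 0 < (A *ᵥ a) ⬝ᵥ (A *ᵥ a) :=
        lt_of_le_of_ne h2 fun e => hAne (dotProduct_self_eq_zero.mp e.symm)
      have h4 : 0 < vth • ((A *ᵥ a) ⬝ᵥ (A *ᵥ a)) := by
        rw [smul_eq_mul]; exact mul_pos hvth h3
      linarith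
  exact ⟨hpd, hpd.isUnit⟩
end

section
/- For ζ ∈ ℝ^p, γ > 1/ϑ, λ > 0, ϑ > 0, and with the MCP penalty p_γ(t, λ) = λ∫₀^{|t|}(1 − x/(γλ))₊ dx, if ‖ζ‖ > γλ then δ = ζ is the minimizer of (ϑ/2)‖ζ − δ‖² + p_γ(‖δ‖, λ) over δ ∈ ℝ^p. -/
open intervalIntegral

lemma mcp_cont (c : ℝ) : Continuous (fun x : ℝ => max (1 - x / c) 0) := by
  fun_prop

lemma mcp_int_le (c s : ℝ) (hc : 0 < c) (hs : 0 ≤ s) (hsc : s ≤ c) :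
    ∫ x in (0:ℝ)..s, max (1 - x / c) 0 = s - s ^ 2 / (2 * c) := by
  rw [intervalIntegral.integral_congr (g := fun x => 1 - x / c)]
  · rw [intervalIntegral.integral_sub intervalIntegrable_const
      ((intervalIntegral.intervalIntegrable_id).div_const c)]
    simp [intervalIntegral.integral_div, integral_id]
    ring
  · intro x hx
    rw [Set.uIcc_of_le hs] at hx
    have hx1 : x ≤ c := le_trans hx.2 hsc
    have : 0 ≤ 1 - x / c := by
      rw [sub_nonneg, div_le_one hc]; exact hx1
    simp [max_eq_left this]

lemma mcp_int_ge (c s : ℝ) (hc : 0 < c) (hsc : c ≤ s) :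
    ∫ x in (0:ℝ)..s, max (1 - x / c) 0 = c / 2 := by
  have hint : ∀ a b : ℝ, IntervalIntegrable (fun x : ℝ => max (1 - x / c) 0)
      MeasureTheory.volume a b := fun a b => (mcp_cont c).intervalIntegrable a b
  rw [← intervalIntegral.integral_add_adjacent_intervals (b := c) (hint 0 c) (hint c s)]
  have h1 : ∫ x in (0:ℝ)..c, max (1 - x / c) 0 = c / 2 := by
    rw [mcp_int_le c c hc hc.le le_rfl]
    field_simp; ring
  have h2 : ∫ x in c..s, max (1 - x / c) 0 = 0 := by
    rw [intervalIntegral.integral_congr (g := fun _ => (0:ℝ))]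
    · simp
    · intro x hx
      rw [Set.uIcc_of_le hsc] at hx
      have : 1 - x / c ≤ 0 := by
        rw [sub_nonpos, le_div_iff₀ hc, one_mul]; exact hx.1
      simp [max_eq_right this]
  rw [h1, h2, add_zero]

/-- For the MCP penalty with γ > 1/ϑ, if ‖ζ‖ > γλ then δ = ζ minimizes
(ϑ/2)‖ζ − δ‖² + p_γ(‖δ‖, λ). -/
theorem stmt_18 (p : ℕ) (γ lam vth : ℝ) (hγ : 1 / vth < γ) (hlam : 0 < lam) (hvth : 0 < vth)
    (ζ : EuclideanSpace ℝ (Fin p)) (hζ : γ * lam < ‖ζ‖) :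
    let pen : ℝ → ℝ := fun t => lam * ∫ x in (0 : ℝ)..|t|, max (1 - x / (γ * lam)) 0
    ∀ δ : EuclideanSpace ℝ (Fin p),
      vth / 2 * ‖ζ - ζ‖ ^ 2 + pen ‖ζ‖ ≤ vth / 2 * ‖ζ - δ‖ ^ 2 + pen ‖δ‖ := by
  intro pen δ
  set c := γ * lam with hcdef
  have hc : 0 < c := by
    have hγpos : 0 < γ := lt_trans (by positivity) hγ
    positivity
  have hlamc : lam < c * vth := by
    have hγpos : 0 < γ := lt_trans (by positivity) hγ
    have : 1 < γ * vth := by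
      rw [div_lt_iff₀ hvth] at hγ; linarith
    calc lam = lam * 1 := (mul_one lam).symm
      _ < lam * (γ * vth) := by exact (mul_lt_mul_iff_right₀ hlam).2 this
      _ = c * vth := by ring
  have hpenζ : pen ‖ζ‖ = lam * (c / 2) := by
    simp only [pen, abs_of_nonneg (norm_nonneg ζ)]
    rw [mcp_int_ge c ‖ζ‖ hc hζ.le]
  have hn : ‖ζ‖ - ‖δ‖ ≤ ‖ζ - δ‖ := norm_sub_norm_le ζ δ
  simp only [sub_self, norm_zero]
  rw [hpenζ]
  rcases le_or_gt ‖δ‖ c with h | h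
  · have hpenδ : pen ‖δ‖ = lam * (‖δ‖ - ‖δ‖ ^ 2 / (2 * c)) := by
      simp only [pen, abs_of_nonneg (norm_nonneg δ)]
      rw [mcp_int_le c ‖δ‖ hc (norm_nonneg δ) h]
    rw [hpenδ]
    have hct : 0 ≤ c - ‖δ‖ := by linarith
    have hcn : c - ‖δ‖ ≤ ‖ζ - δ‖ := by linarith
    have key : lam * (c - ‖δ‖) ^ 2 ≤ c * vth * (c - ‖δ‖) ^ 2 := by
      nlinarith [sq_nonneg (c - ‖δ‖)]
    have key2 : (c - ‖δ‖) ^ 2 ≤ ‖ζ - δ‖ ^ 2 := by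
      nlinarith [norm_nonneg (ζ - δ)]
    have expand : lam * (c / 2) - lam * (‖δ‖ - ‖δ‖ ^ 2 / (2 * c))
        = lam * (c - ‖δ‖) ^ 2 / (2 * c) := by
      field_simp; ring
    have step1 : lam * (c - ‖δ‖) ^ 2 / (2 * c) ≤ vth * (c - ‖δ‖) ^ 2 / 2 := by
      rw [div_le_div_iff₀ (by linarith) (by norm_num)]
      nlinarith
    have step2 : vth * (c - ‖δ‖) ^ 2 / 2 ≤ vth * ‖ζ - δ‖ ^ 2 / 2 := by
      nlinarith
    nlinarith [step1, step2, expand]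
  · have hpenδ : pen ‖δ‖ = lam * (c / 2) := by
      simp only [pen, abs_of_nonneg (norm_nonneg δ)]
      rw [mcp_int_ge c ‖δ‖ hc h.le]
    rw [hpenδ]
    nlinarith [norm_nonneg (ζ - δ), sq_nonneg ‖ζ - δ‖]
end
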